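/- Let n, m, r ∈ ℕ with m < r < n. Let μ_i, i = 1, …, n, denote the averages over the n equispaced segments of S^eq_n on [−1,1], and let u_1, …, u_r be a basis of ℙ_{r−1}. Define N_{n,r} = (μ_i(u_j))_{1≤i≤n, 1≤j≤r} ∈ ℝ^{n×r}, let ι_1 < … < ι_m be indices in {1, …, n} and let N_{m,r} ∈ ℝ^{m×r} be the submatrix of N_{n,r} formed by the rows ι_1, …, ι_m. Set G = 2 N_{n,r}ᵀ N_{n,r}. Then the KKT matrix M = [[G, N_{m,r}ᵀ], [N_{m,r}, 0]] ∈ ℝ^{(r+m)×(r+m)} is nonsingular. -/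

import Mathlib

open Real Set Polynomial
open scoped Matrix

/-- Segmental average: `μ_[a,b](f) = (b-a)⁻¹ ∫_a^b f`. -/
noncomputable def segAvg (a b : ℝ) (f : ℝ → ℝ) : ℝ := (b - a)⁻¹ * ∫ x in a..b, f x

lemma antideriv_exists (p : Polynomial ℝ) :
    ∃ P : Polynomial ℝ, derivative P = p ∧ P.natDegree ≤ p.natDegree + 1 := by
  refine ⟨p.sum fun k a => C (a / (k + 1)) * X ^ (k + 1), ?_, ?_⟩
  · rw [Polynomial.sum, map_sum]
    conv_rhs => rw [← Polynomial.sum_C_mul_X_pow_eq p, Polynomial.sum]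
    refine Finset.sum_congr rfl fun k _ => ?_
    rw [derivative_C_mul, derivative_X_pow]
    have hk : ((k : ℝ) + 1) ≠ 0 := by positivity
    rw [Nat.add_sub_cancel, ← mul_assoc, ← C_mul]
    push_cast
    rw [div_mul_cancel₀ _ hk]
  · rw [Polynomial.sum]
    refine natDegree_sum_le_of_forall_le _ _ fun k hk => ?_
    refine (natDegree_C_mul_le _ _).trans ((natDegree_X_pow_le _).trans ?_)
    exact Nat.succ_le_succ (le_natDegree_of_mem_supp _ hk)

lemma integral_eval_poly (P p : Polynomial ℝ) (h : derivative P = p) (a b : ℝ) :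
    ∫ x in a..b, p.eval x = P.eval b - P.eval a := by
  refine intervalIntegral.integral_deriv_eq_sub' (fun x => P.eval x) ?_ ?_ ?_
  · funext x; rw [Polynomial.deriv, h]
  · exact fun x _ => P.differentiable.differentiableAt
  · exact p.continuous.continuousOn

lemma integral_eval_comb (a b : ℝ) {k : ℕ} (v : Fin k → Polynomial ℝ) (c : Fin k → ℝ) :
    ∫ x in a..b, (∑ j, c j • v j).eval x = ∑ j, c j * ∫ x in a..b, (v j).eval x := by
  have h : ∀ x, (∑ j, c j • v j).eval x = ∑ j, c j * (v j).eval x := by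
    intro x; simp [eval_finset_sum]
  rw [intervalIntegral.integral_congr (g := fun x => ∑ j, c j * (v j).eval x) (fun x _ => h x),
    intervalIntegral.integral_finset_sum (f := fun j x => c j * (v j).eval x)
      (fun j _ => (continuous_const.mul ((v j).continuous)).intervalIntegrable _ _)]
  simp [intervalIntegral.integral_const_mul]

lemma span_degreeLT (r : ℕ) (hr : 0 < r) (u : Fin r → Polynomial ℝ)
    (hu : ∀ j, u j ∈ degreeLT ℝ r) (huli : LinearIndependent ℝ u)
    (q : Polynomial ℝ) (hq : q ∈ degreeLT ℝ r) :
    ∃ c : Fin r → ℝ, q = ∑ j, c j • u j := by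
  haveI : Nonempty (Fin r) := ⟨⟨0, hr⟩⟩
  haveI : FiniteDimensional ℝ (degreeLT ℝ r) :=
    Module.Finite.equiv (Polynomial.degreeLTEquiv ℝ r).symm
  set u' : Fin r → degreeLT ℝ r := fun j => ⟨u j, hu j⟩ with hu'
  have hli' : LinearIndependent ℝ u' := by
    have h2 : u = (degreeLT ℝ r).subtype ∘ u' := rfl
    rw [h2] at huli; exact huli.of_comp _
  have hcard : Fintype.card (Fin r) = Module.finrank ℝ (degreeLT ℝ r) := by
    rw [(Polynomial.degreeLTEquiv ℝ r).finrank_eq]; simp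
  let b := basisOfLinearIndependentOfCardEqFinrank hli' hcard
  have hb : ⇑b = u' := coe_basisOfLinearIndependentOfCardEqFinrank _ _
  refine ⟨fun j => b.repr ⟨q, hq⟩ j, ?_⟩
  have hs := b.sum_repr ⟨q, hq⟩
  calc q = ((⟨q, hq⟩ : degreeLT ℝ r) : Polynomial ℝ) := rfl
    _ = ((∑ j, b.repr ⟨q, hq⟩ j • b j : degreeLT ℝ r) : Polynomial ℝ) := by rw [hs]
    _ = ∑ j, b.repr ⟨q, hq⟩ j • u j := by
        rw [Submodule.coe_sum]; simp [hb, hu']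

lemma poly_zero_of_integrals (n r : ℕ) (hn : 0 < n) (hrn : r ≤ n) (p : Polynomial ℝ)
    (hp : p.degree < r)
    (h : ∀ i, i < n → ∫ x in (-1 + 2*(i:ℝ)/n)..(-1 + 2*((i:ℝ)+1)/n), p.eval x = 0) :
    p = 0 := by
  by_contra hp0
  obtain ⟨P, hP, hdeg⟩ := antideriv_exists p
  have hnd : p.natDegree < r := (Polynomial.natDegree_lt_iff_degree_lt hp0).mpr hp
  have hPd : P.natDegree ≤ n := hdeg.trans (by omega)
  set g : ℕ → ℝ := fun k => -1 + 2*(k:ℝ)/n with hg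
  have key : ∀ i, i ≤ n → P.eval (g i) = P.eval (g 0) := by
    intro i hi
    induction i with
    | zero => rfl
    | succ k ih =>
      have hk := h k (by omega)
      rw [integral_eval_poly P p hP] at hk
      have : P.eval (g (k+1)) = P.eval (g k) := by
        have : P.eval (-1 + 2*((k:ℝ)+1)/n) = P.eval (-1 + 2*(k:ℝ)/n) := by linarith
        simpa [hg, Nat.cast_succ] using this
      rw [this, ih (by omega)]
  set Q : Polynomial ℝ := P - C (P.eval (g 0)) with hQ
  have hQz : ∀ i : Fin (n+1), Q.eval (g i) = 0 := by
    intro i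
    simp only [hQ, eval_sub, eval_C]
    rw [key i (by omega)]; ring
  have hginj : Function.Injective (fun i : Fin (n+1) => g (i : ℕ)) := by
    intro a b hab
    simp only [hg] at hab
    have hn' : (n:ℝ) ≠ 0 := Nat.cast_ne_zero.mpr hn.ne'
    field_simp at hab
    have hab' : ((a:ℕ):ℝ) = ((b:ℕ):ℝ) := by linarith
    exact Fin.ext (by exact_mod_cast hab')
  have hQ0 : Q = 0 := by
    refine Polynomial.eq_zero_of_natDegree_lt_card_of_eval_eq_zero Q hginj hQz ?_
    have : Q.natDegree ≤ n := le_trans (natDegree_sub_le _ _) (by simp [hPd])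
    simpa using Nat.lt_succ_of_le this
  apply hp0
  have : derivative Q = p := by rw [hQ, derivative_sub, derivative_C, sub_zero, hP]
  rw [← this, hQ0, map_zero]

noncomputable def sgnSeq (m : ℕ) (y : Fin m → ℝ) : ℕ → ℝ
  | 0 => if h : 0 < m then (if y ⟨0, h⟩ < 0 then (-1:ℝ) else 1) else 1
  | (k+1) => if h : k+1 < m then
      (if y ⟨k+1, h⟩ = 0 then sgnSeq m y k else if y ⟨k+1, h⟩ < 0 then -1 else 1)
      else sgnSeq m y k

lemma sgnSeq_sq (m : ℕ) (y : Fin m → ℝ) (k : ℕ) : sgnSeq m y k = 1 ∨ sgnSeq m y k = -1 := by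
  induction k with
  | zero => unfold sgnSeq; split_ifs <;> simp
  | succ k ih => unfold sgnSeq; split_ifs <;> simp [ih]

lemma sgnSeq_mul_pos (m : ℕ) (y : Fin m → ℝ) (k : ℕ) (h : k < m) (hy : y ⟨k, h⟩ ≠ 0) :
    0 < y ⟨k, h⟩ * sgnSeq m y k := by
  cases k with
  | zero =>
    unfold sgnSeq; rw [dif_pos h]
    rcases lt_or_gt_of_ne hy with h1 | h1
    · rw [if_pos h1]; nlinarith
    · rw [if_neg (not_lt.mpr h1.le)]; nlinarith
  | succ k =>
    unfold sgnSeq; rw [dif_pos h, if_neg hy]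
    rcases lt_or_gt_of_ne hy with h1 | h1
    · rw [if_pos h1]; nlinarith
    · rw [if_neg (not_lt.mpr h1.le)]; nlinarith

lemma suffix_sign (mm : ℕ) (s c : ℕ → ℝ) (hs : ∀ k, s k = 1 ∨ s k = -1)
    (hc : Monotone c) (x : ℝ) :
    ∀ t i, i + t = mm → x < c i →
      0 < s i * s mm * ∏ k ∈ Finset.Ico i mm, (if s k = s (k+1) then 1 else x - c k) := by
  intro t
  induction t with
  | zero =>
    intro i hit hx
    subst hit
    simp only [Nat.add_zero, Finset.Ico_self, Finset.prod_empty, mul_one]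
    rcases hs i with h | h <;> rw [h] <;> norm_num
  | succ t ih =>
    intro i hit hx
    have hilt : i < mm := by omega
    rw [Finset.prod_eq_prod_Ico_succ_bot hilt]
    have hIH := ih (i+1) (by omega) (lt_of_lt_of_le hx (hc (by omega)))
    by_cases hcase : s i = s (i+1)
    · rw [if_pos hcase, hcase]
      calc (0:ℝ) < s (i+1) * s mm * ∏ k ∈ Finset.Ico (i+1) mm,
            (if s k = s (k+1) then 1 else x - c k) := hIH
        _ = s (i+1) * s mm * (1 * ∏ k ∈ Finset.Ico (i+1) mm,
            (if s k = s (k+1) then 1 else x - c k)) := by ring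
    · rw [if_neg hcase]
      have hsi : s i = -s (i+1) := by
        rcases hs i with h1 | h1 <;> rcases hs (i+1) with h2 | h2 <;>
          simp [h1, h2] at hcase ⊢
      have key : s i * s mm * ((x - c i) * ∏ k ∈ Finset.Ico (i+1) mm,
            (if s k = s (k+1) then 1 else x - c k))
          = (c i - x) * (s (i+1) * s mm * ∏ k ∈ Finset.Ico (i+1) mm,
            (if s k = s (k+1) then 1 else x - c k)) := by
        rw [hsi]; ring
      rw [key]
      exact mul_pos (by linarith) hIH

lemma stepB (n m r : ℕ) (hn : 0 < n) (hmr : m < r) (ι : Fin m → Fin n) (hι : StrictMono ι)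
    (y : Fin m → ℝ)
    (hzero : ∀ q : Polynomial ℝ, q.degree < (r : ℕ) →
      ∑ i, y i * ∫ x in (-1 + 2*((ι i : ℕ):ℝ)/n)..(-1 + 2*(((ι i : ℕ):ℝ)+1)/n), q.eval x = 0) :
    y = 0 := by
  by_contra hy0
  obtain ⟨i0, hi0⟩ := Function.ne_iff.mp hy0
  simp only [Pi.zero_apply] at hi0
  have hm : 0 < m := i0.pos
  set mm := m - 1 with hmm
  set ι' : ℕ → ℕ := fun k => if h : k < m then (ι ⟨k, h⟩ : ℕ) else n + k with hι'def
  have hι'mono : StrictMono ι' := by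
    intro a b hab
    dsimp [ι']
    split_ifs with ha hb hb
    · exact Fin.lt_def.mp (hι (Fin.mk_lt_mk.mpr hab))
    · have := (ι ⟨a, ha⟩).2; omega
    · omega
    · omega
  set g : ℕ → ℝ := fun t => -1 + 2*(t:ℝ)/n with hgdef
  have hn' : (0:ℝ) < n := by exact_mod_cast hn
  have hgm : StrictMono g := by
    intro a b hab
    have hab' : (a:ℝ) < b := by exact_mod_cast hab
    dsimp [g]
    have h2 : 2*(a:ℝ)/n < 2*(b:ℝ)/n := by gcongr <;> linarith
    linarith
  set s := sgnSeq m y with hsdef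
  set c : ℕ → ℝ := fun k => g (ι' k + 1) with hcdef
  have hcmono : Monotone c := by
    have hsm : StrictMono c := fun a b h => hgm (by have := hι'mono h; omega)
    exact hsm.monotone
  set A : Fin m → ℝ := fun i => g (ι' (i : ℕ)) with hAdef
  have hι'eq : ∀ i : Fin m, ι' (i : ℕ) = (ι i : ℕ) := by
    intro i; simp [ι', i.2]
  set q0 : Polynomial ℝ :=
    ∏ k ∈ Finset.range mm, (if s k = s (k+1) then (1:Polynomial ℝ) else X - C (c k)) with hq0def
  set q : Polynomial ℝ := C (s mm) * q0 with hqdef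
  have hq0deg : q0.natDegree ≤ mm := by
    refine le_trans (Polynomial.natDegree_prod_le _ _) ?_
    have h1 : ∀ k ∈ Finset.range mm,
        ((if s k = s (k+1) then (1:Polynomial ℝ) else X - C (c k))).natDegree ≤ 1 := by
      intro k _; split_ifs
      · simp
      · exact le_of_eq (natDegree_X_sub_C _)
    calc ∑ k ∈ Finset.range mm,
          ((if s k = s (k+1) then (1:Polynomial ℝ) else X - C (c k))).natDegree
        ≤ Finset.card (Finset.range mm) • 1 := Finset.sum_le_card_nsmul _ _ 1 h1
      _ = mm := by simp
  have hdeg : q.degree < (r : ℕ) := by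
    have h2 : q.natDegree < r := by
      have h3 := natDegree_C_mul_le (s mm) q0
      rw [← hqdef] at h3
      omega
    exact lt_of_le_of_lt degree_le_natDegree (by exact_mod_cast h2)
  have hq_eval : ∀ x : ℝ, q.eval x
      = s mm * ∏ k ∈ Finset.range mm, (if s k = s (k+1) then 1 else x - c k) := by
    intro x
    rw [hqdef, eval_mul, eval_C, eval_prod]
    congr 1
    refine Finset.prod_congr rfl fun k _ => ?_
    split_ifs <;> simp
  have hAB : ∀ i : Fin m, A i < c (i : ℕ) := fun i => hgm (by omega)
  have hpos : ∀ i : Fin m, y i ≠ 0 → ∀ x ∈ Ioo (A i) (c (i:ℕ)), 0 < y i * q.eval x := by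
    intro i hyi x hx
    obtain ⟨hx1, hx2⟩ := hx
    have hsq : s (i:ℕ) * s (i:ℕ) = 1 := by
      rw [hsdef]
      rcases sgnSeq_sq m y (i:ℕ) with h | h <;> rw [h] <;> norm_num
    have h1 : 0 < y i * s (i:ℕ) := by
      rw [hsdef]
      have := sgnSeq_mul_pos m y (i:ℕ) i.2 (by simpa using hyi)
      simpa using this
    have hile : (i:ℕ) ≤ mm := by have := i.2; omega
    have hprod : ∏ k ∈ Finset.range mm, (if s k = s (k+1) then 1 else x - c k)
        = (∏ k ∈ Finset.Ico 0 (i:ℕ), (if s k = s (k+1) then 1 else x - c k)) *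
          ∏ k ∈ Finset.Ico (i:ℕ) mm, (if s k = s (k+1) then 1 else x - c k) := by
      rw [Finset.range_eq_Ico, ← Finset.prod_Ico_consecutive _ (Nat.zero_le _) hile]
    have hpre : 0 < ∏ k ∈ Finset.Ico 0 (i:ℕ), (if s k = s (k+1) then 1 else x - c k) := by
      apply Finset.prod_pos
      intro k hk
      rw [Finset.mem_Ico] at hk
      split_ifs
      · norm_num
      · have hlt : ι' k < ι' (i:ℕ) := hι'mono hk.2
        have hck : c k ≤ A i := by
          rcases Nat.lt_or_ge (ι' k + 1) (ι' (i:ℕ)) with h | h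
          · exact le_of_lt (hgm h)
          · have : ι' k + 1 = ι' (i:ℕ) := by omega
            rw [hcdef]; dsimp only; rw [this]
        linarith
    have hsuf := suffix_sign mm s c (sgnSeq_sq m y) hcmono x (mm - (i:ℕ)) (i:ℕ)
      (by omega) hx2
    rw [hq_eval, hprod]
    have heq : (y i * s (i:ℕ)) * (∏ k ∈ Finset.Ico 0 (i:ℕ), (if s k = s (k+1) then 1 else x - c k))
          * (s (i:ℕ) * s mm * ∏ k ∈ Finset.Ico (i:ℕ) mm, (if s k = s (k+1) then 1 else x - c k))
        = y i * (s mm * ((∏ k ∈ Finset.Ico 0 (i:ℕ), (if s k = s (k+1) then 1 else x - c k)) *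
          ∏ k ∈ Finset.Ico (i:ℕ) mm, (if s k = s (k+1) then 1 else x - c k))) := by
      linear_combination (y i * (∏ k ∈ Finset.Ico 0 (i:ℕ), (if s k = s (k+1) then 1 else x - c k))
        * (∏ k ∈ Finset.Ico (i:ℕ) mm, (if s k = s (k+1) then 1 else x - c k)) * s mm) * hsq
    rw [← heq]
    exact mul_pos (mul_pos h1 hpre) hsuf
  have hsum2 : ∑ i, y i * ∫ x in (A i)..(c (i:ℕ)), q.eval x = 0 := by
    rw [← hzero q hdeg]
    refine Finset.sum_congr rfl fun i _ => ?_
    have e1 : A i = -1 + 2*((ι i : ℕ):ℝ)/n := by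
      simp only [hAdef, hgdef, hι'eq]
    have e2 : c (i:ℕ) = -1 + 2*(((ι i : ℕ):ℝ)+1)/n := by
      simp only [hcdef, hgdef, hι'eq]
      push_cast; ring
    rw [e1, e2]
  have hposint : ∀ i : Fin m, y i ≠ 0 → 0 < y i * ∫ x in (A i)..(c (i:ℕ)), q.eval x := by
    intro i h
    have hIpos : 0 < ∫ x in (A i)..(c (i:ℕ)), y i * q.eval x :=
      intervalIntegral.intervalIntegral_pos_of_pos_on
        ((continuous_const.mul q.continuous).intervalIntegrable _ _)
        (fun x hx => hpos i h x hx) (hAB i)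
    rwa [intervalIntegral.integral_const_mul] at hIpos
  have hnn : ∀ i ∈ Finset.univ, 0 ≤ y i * ∫ x in (A i)..(c (i:ℕ)), q.eval x := by
    intro i _
    rcases eq_or_ne (y i) 0 with h | h
    · rw [h]; simp
    · exact (hposint i h).le
  have hz := (Finset.sum_eq_zero_iff_of_nonneg hnn).mp hsum2 i0 (Finset.mem_univ _)
  exact (hposint i0 hi0).ne' hz

/-- Nonsingularity of the KKT matrix of the constrained segmental mock-Chebyshev method
(Theorem 4): here `μ_i` are the averages over the equispaced segments of `S^eq_n`,
`u_1, …, u_r` is a basis of `ℙ_{r-1}`, `N = (μ_i(u_j))` and `N_m` is the submatrix given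
by the rows `ι_1 < … < ι_m`. -/
theorem stmt_13 (n m r : ℕ) (hmr : m < r) (hrn : r < n)
    (u : Fin r → Polynomial ℝ)
    (hu : ∀ j, u j ∈ Polynomial.degreeLT ℝ r)
    (huli : LinearIndependent ℝ u)
    (ι : Fin m → Fin n) (hι : StrictMono ι)
    (N : Matrix (Fin n) (Fin r) ℝ)
    (hN : ∀ i j, N i j = segAvg (-1 + 2 * (i : ℝ) / n) (-1 + 2 * ((i : ℝ) + 1) / n)
        fun x => (u j).eval x)
    (Nm : Matrix (Fin m) (Fin r) ℝ) (hNm : ∀ i j, Nm i j = N (ι i) j) :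
    IsUnit (Matrix.fromBlocks ((2 : ℝ) • (N.transpose * N)) Nm.transpose Nm 0).det := by
  have hnpos : 0 < n := by omega
  have hn' : (0:ℝ) < n := by exact_mod_cast hnpos
  -- integral over segment i in terms of N
  have hseg : ∀ (i : Fin n) (j : Fin r),
      (∫ t in (-1 + 2 * (i : ℝ) / n)..(-1 + 2 * ((i : ℝ) + 1) / n), (u j).eval t)
        = (2/n) * N i j := by
    intro i j
    rw [hN i j]
    unfold segAvg
    have hba : (-1 + 2 * ((i:ℝ) + 1) / n) - (-1 + 2 * (i:ℝ) / n) = 2/n := by ring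
    rw [hba, ← mul_assoc, mul_inv_cancel₀ (by positivity : (2/(n:ℝ)) ≠ 0), one_mul]
  rw [isUnit_iff_ne_zero]
  intro hdet
  obtain ⟨v, hv0, hMv⟩ := (Matrix.exists_mulVec_eq_zero_iff).mpr hdet
  set x : Fin r → ℝ := v ∘ Sum.inl with hxdef
  set y : Fin m → ℝ := v ∘ Sum.inr with hydef
  have hv : v = Sum.elim x y := by funext i; cases i <;> rfl
  rw [hv, Matrix.fromBlocks_mulVec] at hMv
  have h1 : ((2:ℝ) • (N.transpose * N)) *ᵥ x + Nm.transpose *ᵥ y = 0 := by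
    funext j; exact congrFun hMv (Sum.inl j)
  have h2 : Nm *ᵥ x = 0 := by
    have h2' : Nm *ᵥ x + (0 : Matrix (Fin m) (Fin m) ℝ) *ᵥ y = 0 := by
      funext j; exact congrFun hMv (Sum.inr j)
    rwa [Matrix.zero_mulVec, add_zero] at h2'
  -- N *ᵥ x = 0
  have hNx : N *ᵥ x = 0 := by
    have hd := congrArg (fun w => dotProduct x w) h1
    simp only [dotProduct_add, dotProduct_zero] at hd
    have e1 : dotProduct x (((2:ℝ) • (N.transpose * N)) *ᵥ x)
        = 2 * dotProduct (N *ᵥ x) (N *ᵥ x) := by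
      rw [Matrix.smul_mulVec, dotProduct_smul, ← Matrix.mulVec_mulVec,
        Matrix.dotProduct_mulVec x N.transpose, Matrix.vecMul_transpose]
      simp [smul_eq_mul]
    have e2 : dotProduct x (Nm.transpose *ᵥ y)
        = dotProduct (Nm *ᵥ x) y := by
      rw [Matrix.dotProduct_mulVec, Matrix.vecMul_transpose]
    rw [e1, e2, h2, zero_dotProduct, add_zero] at hd
    have : dotProduct (N *ᵥ x) (N *ᵥ x) = 0 := by linarith
    exact dotProduct_self_eq_zero.mp this
  -- step A : x = 0
  have hpz : (∑ j, x j • u j) = 0 := by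
    apply poly_zero_of_integrals n r hnpos (le_of_lt hrn) _
      (mem_degreeLT.mp (Submodule.sum_mem _ (fun j _ => Submodule.smul_mem _ _ (hu j))))
    intro i hi
    have hix := congrFun hNx ⟨i, hi⟩
    simp only [Matrix.mulVec, dotProduct, Pi.zero_apply] at hix
    rw [integral_eval_comb]
    calc ∑ j, x j * ∫ t in (-1 + 2*(i:ℝ)/n)..(-1 + 2*((i:ℝ)+1)/n), (u j).eval t
        = ∑ j, (2/(n:ℝ)) * (N ⟨i, hi⟩ j * x j) := by
          refine Finset.sum_congr rfl fun j _ => ?_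
          rw [hseg ⟨i, hi⟩ j]; push_cast; ring
      _ = (2/(n:ℝ)) * ∑ j, N ⟨i, hi⟩ j * x j := by rw [Finset.mul_sum]
      _ = 0 := by rw [hix, mul_zero]
  have hx0 : x = 0 := by
    funext j
    exact Fintype.linearIndependent_iff.mp huli x hpz j
  -- Nmᵀ y = 0
  have hNmy : Nm.transpose *ᵥ y = 0 := by
    rw [hx0] at h1
    simpa [Matrix.mulVec_zero] using h1
  -- step B : y = 0
  have hy0 : y = 0 := by
    apply stepB n m r hnpos hmr ι hι y
    intro q hq
    obtain ⟨c, hc⟩ := span_degreeLT r (by omega) u hu huli q (mem_degreeLT.mpr hq)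
    rw [hc]
    calc ∑ i, y i * ∫ t in (-1 + 2*((ι i : ℕ):ℝ)/n)..(-1 + 2*(((ι i : ℕ):ℝ)+1)/n),
          (∑ j, c j • u j).eval t
        = ∑ i, ∑ j, y i * (c j * ((2/(n:ℝ)) * N (ι i) j)) := by
          refine Finset.sum_congr rfl fun i _ => ?_
          rw [integral_eval_comb, Finset.mul_sum]
          refine Finset.sum_congr rfl fun j _ => ?_
          rw [hseg (ι i) j]
      _ = ∑ j, (c j * (2/(n:ℝ))) * ∑ i, Nm.transpose j i * y i := by
          rw [Finset.sum_comm]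
          refine Finset.sum_congr rfl fun j _ => ?_
          rw [Finset.mul_sum]
          refine Finset.sum_congr rfl fun i _ => ?_
          rw [Matrix.transpose_apply, hNm i j]; ring
      _ = 0 := by
          refine Finset.sum_eq_zero fun j _ => ?_
          have := congrFun hNmy j
          simp only [Matrix.mulVec, dotProduct, Pi.zero_apply] at this
          rw [this, mul_zero]
  apply hv0
  rw [hv, hx0, hy0]
  funext i; cases i <;> rfl
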